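/- For every semilinear diagonal relation R ⊆ ℕ² there exists a thin 1-GVAS G with R_G = R. -/

import Mathlib

namespace GVASPaper

/-- A one-dimensional Grammar Vector Addition System: a context-free grammar
whose terminals are integers. -/
abbrev GVAS1 : Type 1 := ContextFreeGrammar ℤ

/-- A run (list of integers) is valid at `a` if no prefix sum drops `a` below zero. -/
def ValidRun (a : ℕ) (w : List ℤ) : Prop :=
  ∀ j : ℕ, 0 ≤ (a : ℤ) + (w.take j).sum

namespace GVAS1

/-- `a →_{𝒮(G)} b`: some complete derivation from the initial nonterminal yields a run
valid at `a` with total effect `b - a`. -/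
def Reach (g : GVAS1) (a b : ℕ) : Prop :=
  ∃ w : List ℤ,
    g.Derives [Symbol.nonterminal g.initial] (w.map Symbol.terminal) ∧
    ValidRun a w ∧ (a : ℤ) + w.sum = (b : ℤ)

/-- The reachability relation `R_G ⊆ ℕ²`. -/
def RRel (g : GVAS1) : Set (ℕ × ℕ) := {p | g.Reach p.1 p.2}

/-- A nonterminal is branching if it derives a sentential form containing
two copies of itself. -/
def Branching (g : GVAS1) (X : g.NT) : Prop :=
  ∃ α β γ : List (Symbol ℤ g.NT),
    g.Derives [Symbol.nonterminal X]
      (α ++ Symbol.nonterminal X :: (β ++ Symbol.nonterminal X :: γ))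

/-- A 1-GVAS is thin if all its nonterminals are thin (not branching). -/
def Thin (g : GVAS1) : Prop := ∀ X : g.NT, ¬ g.Branching X

/-- Edge of the graph of the grammar: `Y` occurs in the right-hand side of a rule for `X`. -/
def Edge (g : GVAS1) (X Y : g.NT) : Prop :=
  ∃ r ∈ g.rules, r.input = X ∧ Symbol.nonterminal Y ∈ r.output

/-- `X` is in the top component: `X` and the initial nonterminal lie in the same
strongly connected component of the graph of the grammar. -/
def InTop (g : GVAS1) (X : g.NT) : Prop :=
  Relation.ReflTransGen g.Edge g.initial X ∧ Relation.ReflTransGen g.Edge X g.initial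

/-- A 1-GVAS is top-branching if the nonterminals of its top component are branching. -/
def TopBranching (g : GVAS1) : Prop :=
  ∀ X : g.NT, g.InTop X → g.Branching X

/-- The same grammar with the initial nonterminal changed to `V`. -/
def withInit (g : GVAS1) (V : g.NT) : GVAS1 :=
  { g with initial := V }

end GVAS1

/-- A linear subset of a commutative monoid: `b + P*` for a finite set `P` of periods. -/
def IsLinearSet {M : Type*} [AddCommMonoid M] (S : Set M) : Prop :=
  ∃ (b : M) (P : Finset M),
    S = (fun q => b + q) '' (AddSubmonoid.closure (P : Set M) : Set M)

/-- A semilinear set: a finite union of linear sets. -/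
def IsSemilinearSet {M : Type*} [AddCommMonoid M] (S : Set M) : Prop :=
  ∃ (n : ℕ) (L : Fin n → Set M), (∀ i, IsLinearSet (L i)) ∧ S = ⋃ i, L i

section Construction

open ContextFreeGrammar

variable {n : ℕ}

abbrev NTt (n : ℕ) : Type := Option (Fin n)

def startRule (i : Fin n) : ContextFreeRule ℤ (NTt n) :=
  ⟨none, [Symbol.nonterminal (some i)]⟩

def baseRule (bs : Fin n → ℕ × ℕ) (i : Fin n) : ContextFreeRule ℤ (NTt n) :=
  ⟨some i, [Symbol.terminal (-((bs i).1 : ℤ)), Symbol.terminal (((bs i).2 : ℤ))]⟩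

def perRule (i : Fin n) (p : ℕ × ℕ) : ContextFreeRule ℤ (NTt n) :=
  ⟨some i, [Symbol.terminal (-(p.1 : ℤ)), Symbol.nonterminal (some i),
    Symbol.terminal ((p.2 : ℤ))]⟩

@[reducible] noncomputable def mkG (bs : Fin n → ℕ × ℕ) (Ps : Fin n → Finset (ℕ × ℕ)) : GVAS1 :=
  ⟨NTt n, none,
    haveI := Classical.decEq (ContextFreeRule ℤ (NTt n))
    ((List.finRange n).flatMap (fun i =>
      startRule i :: baseRule bs i ::
        ((insert (1,1) (Ps i)).toList.map (perRule i)))).toFinset⟩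

variable {bs : Fin n → ℕ × ℕ} {Ps : Fin n → Finset (ℕ × ℕ)}

lemma mem_rules_iff {r : ContextFreeRule ℤ (NTt n)} :
    r ∈ (mkG bs Ps).rules ↔
      (∃ i, r = startRule i) ∨ (∃ i, r = baseRule bs i) ∨
        (∃ i p, p ∈ insert (1,1) (Ps i) ∧ r = perRule i p) := by
  classical
  show r ∈ (@List.toFinset _ (Classical.decEq _) ((List.finRange n).flatMap _) : Finset _) ↔ _
  rw [@List.mem_toFinset _ (Classical.decEq _), List.mem_flatMap]
  constructor
  · rintro ⟨i, -, hi⟩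
    simp only [List.mem_cons, List.mem_map] at hi
    rcases hi with rfl | rfl | ⟨p, hp, rfl⟩
    · exact Or.inl ⟨i, rfl⟩
    · exact Or.inr (Or.inl ⟨i, rfl⟩)
    · exact Or.inr (Or.inr ⟨i, p, by simpa using hp, rfl⟩)
  · rintro (⟨i, rfl⟩ | ⟨i, rfl⟩ | ⟨i, p, hp, rfl⟩)
    · exact ⟨i, List.mem_finRange i, by simp⟩
    · exact ⟨i, List.mem_finRange i, by simp⟩
    · refine ⟨i, List.mem_finRange i, ?_⟩
      simp only [List.mem_cons, List.mem_map]
      exact Or.inr (Or.inr ⟨p, by simpa using hp, rfl⟩)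

/-! Thinness -/

def ntCount {N : Type} (s : List (Symbol ℤ N)) : ℕ :=
  s.countP (fun x => match x with | Symbol.nonterminal _ => true | _ => false)

lemma ntCount_append {N : Type} (u v : List (Symbol ℤ N)) :
    ntCount (u ++ v) = ntCount u + ntCount v :=
  List.countP_append

lemma produces_ntCount {u v : List (Symbol ℤ (NTt n))}
    (h : (mkG bs Ps).Produces u v) : ntCount v ≤ ntCount u := by
  obtain ⟨r, hr, hrw⟩ := h
  obtain ⟨p, q, rfl, rfl⟩ := hrw.exists_parts
  have hout : ntCount r.output ≤ 1 := by
    rcases mem_rules_iff.mp hr with ⟨i, rfl⟩ | ⟨i, rfl⟩ | ⟨i, pr, hp, rfl⟩ <;>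
      simp [startRule, baseRule, perRule, ntCount]
  simp only [ntCount_append]
  have : ntCount [Symbol.nonterminal (N := NTt n) r.input] = 1 := by simp [ntCount]
  omega

lemma thin_mkG : ∀ X : (mkG bs Ps).NT, ¬ GVAS1.Branching (mkG bs Ps) X := by
  rintro X ⟨α, β, γ, h⟩
  have key : ∀ u v, (mkG bs Ps).Derives u v → ntCount v ≤ ntCount u := by
    intro u v h
    induction h with
    | refl => exact le_refl _
    | tail _ hstep ih => exact le_trans (produces_ntCount hstep) ih
  have h2 := key _ _ h
  have e1 : ntCount [Symbol.nonterminal (N := NTt n) X] = 1 := by simp [ntCount]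
  have e2 : ntCount (α ++ Symbol.nonterminal X :: (β ++ Symbol.nonterminal X :: γ)) =
      ntCount α + ntCount β + ntCount γ + 2 := by
    simp [ntCount, List.countP_append, List.countP_cons]
    ring
  omega

/-! Sentential forms -/

def wordOf (bs : Fin n → ℕ × ℕ) (i : Fin n) (l : List (ℕ × ℕ)) : List ℤ :=
  (l.map fun p => -(p.1 : ℤ)) ++ [-((bs i).1 : ℤ), ((bs i).2 : ℤ)]
    ++ (l.reverse.map fun p => ((p.2 : ℤ)))

def formOf (i : Fin n) (l : List (ℕ × ℕ)) : List (Symbol ℤ (NTt n)) :=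
  (l.map fun p => Symbol.terminal (-(p.1 : ℤ)))
    ++ [Symbol.nonterminal (some i)]
    ++ (l.reverse.map fun p => Symbol.terminal ((p.2 : ℤ)))

def Inv (bs : Fin n → ℕ × ℕ) (Ps : Fin n → Finset (ℕ × ℕ))
    (s : List (Symbol ℤ (NTt n))) : Prop :=
  s = [Symbol.nonterminal none] ∨
    ∃ i l, (∀ p ∈ l, p ∈ insert (1,1) (Ps i)) ∧
      (s = formOf i l ∨ s = (wordOf bs i l).map Symbol.terminal)

lemma split_eq {N : Type} {X Y : N} :
    ∀ {u : List (Symbol ℤ N)} {v A B : List (Symbol ℤ N)},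
    u ++ Symbol.nonterminal X :: v = A ++ Symbol.nonterminal Y :: B →
    (∀ a ∈ A, ∃ t, a = Symbol.terminal t) → (∀ a ∈ B, ∃ t, a = Symbol.terminal t) →
    u = A ∧ X = Y ∧ v = B := by
  intro u v A B h hA hB
  induction A generalizing u with
  | nil =>
    cases u with
    | nil =>
      simp only [List.nil_append] at h
      injection h with h1 h2
      injection h1 with h1
      exact ⟨rfl, h1, h2⟩
    | cons s u' =>
      simp only [List.nil_append, List.cons_append] at h
      injection h with h1 h2
      exfalso
      have : Symbol.nonterminal (T := ℤ) X ∈ B := h2 ▸ (by simp)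
      obtain ⟨t, ht⟩ := hB _ this
      cases ht
  | cons a A' ih =>
    cases u with
    | nil =>
      simp only [List.nil_append, List.cons_append] at h
      injection h with h1 h2
      obtain ⟨t, ht⟩ := hA a (by simp)
      exact absurd (h1.trans ht) (by simp)
    | cons s u' =>
      simp only [List.cons_append] at h
      injection h with h1 h2
      obtain ⟨e1, e2, e3⟩ := ih h2 (fun x hx => hA x (by simp [hx]))
      exact ⟨by rw [h1, e1], e2, e3⟩

lemma formOf_eq (i : Fin n) (l : List (ℕ × ℕ)) :
    formOf i l = (l.map fun p => Symbol.terminal (T := ℤ) (N := NTt n) (-(p.1 : ℤ)))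
      ++ Symbol.nonterminal (some i)
      :: (l.reverse.map fun p => Symbol.terminal ((p.2 : ℤ))) := by
  simp [formOf]

lemma inv_step {s t : List (Symbol ℤ (NTt n))}
    (h : (mkG bs Ps).Produces s t) (hs : Inv bs Ps s) : Inv bs Ps t := by
  obtain ⟨r, hr, hrw⟩ := h
  obtain ⟨p, q, hpq, rfl⟩ := hrw.exists_parts
  rcases hs with h0 | ⟨i, l, hl, hform | hword⟩
  · -- s = [nonterminal none]
    rw [h0] at hpq
    have heq : p ++ Symbol.nonterminal r.input :: q
        = ([] : List (Symbol ℤ (NTt n))) ++ Symbol.nonterminal none :: [] := by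
      simpa using hpq.symm
    obtain ⟨rfl, hin, rfl⟩ := split_eq heq (by simp) (by simp)
    rcases mem_rules_iff.mp hr with ⟨j, rfl⟩ | ⟨j, rfl⟩ | ⟨j, pr, hp, rfl⟩
    · refine Or.inr ⟨j, [], by simp, Or.inl ?_⟩
      simp [startRule, formOf]
    · exact absurd hin (by simp [baseRule])
    · exact absurd hin (by simp [perRule])
  · -- s = formOf i l
    rw [hform, formOf_eq] at hpq
    have heq : p ++ Symbol.nonterminal r.input :: q
        = (l.map fun p => Symbol.terminal (T := ℤ) (N := NTt n) (-(p.1 : ℤ)))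
          ++ Symbol.nonterminal (some i)
          :: (l.reverse.map fun p => Symbol.terminal ((p.2 : ℤ))) := by
      simpa using hpq.symm
    have hA : ∀ a ∈ (l.map fun p => Symbol.terminal (T := ℤ) (N := NTt n) (-(p.1 : ℤ))),
        ∃ t, a = Symbol.terminal t := by
      intro a ha
      simp only [List.mem_map] at ha
      obtain ⟨x, -, rfl⟩ := ha
      exact ⟨_, rfl⟩
    have hB : ∀ a ∈ (l.reverse.map fun p => Symbol.terminal (T := ℤ) (N := NTt n) ((p.2 : ℤ))),
        ∃ t, a = Symbol.terminal t := by
      intro a ha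
      simp only [List.mem_map] at ha
      obtain ⟨x, -, rfl⟩ := ha
      exact ⟨_, rfl⟩
    obtain ⟨rfl, hin, rfl⟩ := split_eq heq hA hB
    rcases mem_rules_iff.mp hr with ⟨j, rfl⟩ | ⟨j, rfl⟩ | ⟨j, pr, hp, rfl⟩
    · exact absurd hin (by simp [startRule])
    · have hij : j = i := by have h' := hin; simp only [baseRule] at h'; exact Option.some.inj h'
      subst hij
      refine Or.inr ⟨j, l, hl, Or.inr ?_⟩
      simp [baseRule, wordOf, Function.comp_def]
    · have hij : j = i := by have h' := hin; simp only [perRule] at h'; exact Option.some.inj h'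
      subst hij
      refine Or.inr ⟨j, l ++ [pr], ?_, Or.inl ?_⟩
      · intro x hx
        rcases List.mem_append.mp hx with hx | hx
        · exact hl x hx
        · exact (List.mem_singleton.mp hx) ▸ hp
      · simp [perRule, formOf, Function.comp_def]
  · -- s is all-terminal: impossible
    exfalso
    rw [hword] at hpq
    have : Symbol.nonterminal (T := ℤ) r.input ∈ (wordOf bs i l).map Symbol.terminal := by
      rw [hpq]; simp
    simp only [List.mem_map] at this
    obtain ⟨x, -, hx⟩ := this
    cases hx

lemma inv_derives {s t : List (Symbol ℤ (NTt n))}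
    (h : (mkG bs Ps).Derives s t) (hs : Inv bs Ps s) : Inv bs Ps t := by
  induction h with
  | refl => exact hs
  | tail _ hstep ih => exact inv_step hstep ih

lemma derives_form (i : Fin n) (l : List (ℕ × ℕ))
    (hl : ∀ p ∈ l, p ∈ insert (1,1) (Ps i)) :
    (mkG bs Ps).Derives [Symbol.nonterminal (some i)] (formOf i l) := by
  induction l with
  | nil => rw [show formOf (n := n) i [] = [Symbol.nonterminal (some i)] by simp [formOf]]
  | cons p l ih =>
    have hstep : (mkG bs Ps).Produces [Symbol.nonterminal (some i)] ((perRule i p).output) :=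
      ⟨perRule i p, mem_rules_iff.mpr (Or.inr (Or.inr ⟨i, p, hl p (by simp), rfl⟩)),
        ContextFreeRule.Rewrites.input_output⟩
    have ih' := ih (fun x hx => hl x (by simp [hx]))
    refine hstep.trans_derives ?_
    have h2 := (ih'.append_right [Symbol.terminal ((p.2 : ℤ))]).append_left
      [Symbol.terminal (-(p.1 : ℤ))]
    simpa [perRule, formOf] using h2

lemma produces_word (i : Fin n) (l : List (ℕ × ℕ)) :
    (mkG bs Ps).Produces (formOf i l) ((wordOf bs i l).map Symbol.terminal) := by
  refine ⟨baseRule bs i, mem_rules_iff.mpr (Or.inr (Or.inl ⟨i, rfl⟩)), ?_⟩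
  have h := ContextFreeRule.rewrites_of_exists_parts (baseRule bs i)
    (l.map fun p => Symbol.terminal (-(p.1 : ℤ)))
    (l.reverse.map fun p => Symbol.terminal ((p.2 : ℤ)))
  have e1 : formOf i l
      = (l.map fun p => Symbol.terminal (T := ℤ) (-(p.1 : ℤ)))
        ++ [Symbol.nonterminal ((baseRule bs i).input)]
        ++ (l.reverse.map fun p => Symbol.terminal ((p.2 : ℤ))) := by
    simp [formOf, baseRule]
  have e2 : (wordOf bs i l).map Symbol.terminal
      = (l.map fun p => Symbol.terminal (T := ℤ) (N := NTt n) (-(p.1 : ℤ)))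
        ++ (baseRule bs i).output
        ++ (l.reverse.map fun p => Symbol.terminal ((p.2 : ℤ))) := by
    simp [wordOf, baseRule, Function.comp_def]
  rw [e1, e2]
  exact h

lemma generates_iff {w : List ℤ} :
    (mkG bs Ps).Derives [Symbol.nonterminal (mkG bs Ps).initial] (w.map Symbol.terminal) ↔
      ∃ i l, (∀ p ∈ l, p ∈ insert (1,1) (Ps i)) ∧ w = wordOf bs i l := by
  constructor
  · intro h
    have hinv : Inv bs Ps (w.map Symbol.terminal) :=
      inv_derives h (Or.inl rfl)
    rcases hinv with h0 | ⟨i, l, hl, hform | hword⟩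
    · exfalso
      have : Symbol.nonterminal (T := ℤ) (none : NTt n) ∈ w.map Symbol.terminal := by
        rw [h0]; simp
      simp only [List.mem_map] at this
      obtain ⟨x, -, hx⟩ := this
      cases hx
    · exfalso
      have : Symbol.nonterminal (T := ℤ) (some i) ∈ w.map Symbol.terminal := by
        rw [hform, formOf]; simp
      simp only [List.mem_map] at this
      obtain ⟨x, -, hx⟩ := this
      cases hx
    · refine ⟨i, l, hl, ?_⟩
      have : Function.Injective (Symbol.terminal : ℤ → Symbol ℤ (NTt n)) := by
        intro a b hab
        injection hab
      exact List.map_injective_iff.mpr this hword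
  · rintro ⟨i, l, hl, rfl⟩
    have h0 : (mkG bs Ps).Produces [Symbol.nonterminal (mkG bs Ps).initial]
        [Symbol.nonterminal (some i)] :=
      ⟨startRule i, mem_rules_iff.mpr (Or.inl ⟨i, rfl⟩),
        ContextFreeRule.Rewrites.input_output⟩
    exact h0.trans_derives ((derives_form i l hl).trans (produces_word i l).single)

/-! Arithmetic of runs -/

def s1 (l : List (ℕ × ℕ)) : ℕ := (l.map Prod.fst).sum
def s2 (l : List (ℕ × ℕ)) : ℕ := (l.map Prod.snd).sum

lemma sum_neg_fst (l : List (ℕ × ℕ)) :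
    ((l.map fun p => -(p.1 : ℤ))).sum = -(s1 l : ℤ) := by
  induction l with
  | nil => simp [s1]
  | cons p l ih => simp [s1, List.sum_cons] at ih ⊢; push_cast; omega

lemma sum_snd_rev (l : List (ℕ × ℕ)) :
    ((l.reverse.map fun p => ((p.2 : ℤ)))).sum = (s2 l : ℤ) := by
  rw [List.map_reverse, List.sum_reverse]
  induction l with
  | nil => simp [s2]
  | cons p l ih =>
    simp only [s2, List.map_cons, List.sum_cons, Nat.cast_add] at ih ⊢
    omega

lemma wordOf_sum (i : Fin n) (l : List (ℕ × ℕ)) :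
    (wordOf bs i l).sum = -(s1 l : ℤ) - ((bs i).1 : ℤ) + ((bs i).2 : ℤ) + (s2 l : ℤ) := by
  rw [wordOf, List.sum_append, List.sum_append, sum_neg_fst, sum_snd_rev]
  simp only [List.sum_cons, List.sum_nil]
  ring

lemma validRun_iff (a : ℕ) (i : Fin n) (l : List (ℕ × ℕ)) :
    ValidRun a (wordOf bs i l) ↔ (bs i).1 + s1 l ≤ a := by
  constructor
  · intro h
    have hj := h (l.length + 1)
    have e : ((wordOf bs i l).take (l.length + 1)).sum = -(s1 l : ℤ) - ((bs i).1 : ℤ) := by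
      have : (wordOf bs i l).take (l.length + 1)
          = (l.map fun p => -(p.1 : ℤ)) ++ [-((bs i).1 : ℤ)] := by
        rw [wordOf, List.append_assoc, List.take_append]
        rw [List.take_of_length_le (by simp)]
        congr 1
        simp
      rw [this, List.sum_append, sum_neg_fst]
      simp only [List.sum_cons, List.sum_nil]
      ring
    rw [e] at hj
    omega
  · intro h j
    have hs1take : ∀ k, s1 (l.take k) ≤ s1 l := by
      intro k
      have hsplit : l.map Prod.fst = (l.take k).map Prod.fst ++ (l.drop k).map Prod.fst := by
        rw [← List.map_append, List.take_append_drop]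
      have := congrArg List.sum hsplit
      rw [List.sum_append] at this
      simp only [s1]
      omega
    by_cases h1 : j ≤ l.length
    · have e : (wordOf bs i l).take j = (l.take j).map fun p => -(p.1 : ℤ) := by
        rw [wordOf, List.append_assoc, List.take_append_of_le_length (by simpa using h1),
          List.map_take]
      rw [e, sum_neg_fst]
      have := hs1take j
      omega
    · push_neg at h1
      have e0 : (wordOf bs i l).take j
          = (l.map fun p => -(p.1 : ℤ))
            ++ (([-((bs i).1 : ℤ), ((bs i).2 : ℤ)]
              ++ (l.reverse.map fun p => ((p.2 : ℤ)))).take (j - l.length)) := by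
        rw [wordOf, List.append_assoc, List.take_append,
          List.take_of_length_le (by simp; omega)]
        congr 2
        simp
      by_cases h2 : j = l.length + 1
      · have e : (wordOf bs i l).take j
            = (l.map fun p => -(p.1 : ℤ)) ++ [-((bs i).1 : ℤ)] := by
          rw [e0, h2]
          congr 1
          simp
        rw [e, List.sum_append, sum_neg_fst]
        simp only [List.sum_cons, List.sum_nil]
        omega
      · have h3 : l.length + 2 ≤ j := by omega
        have e : (wordOf bs i l).take j
            = (l.map fun p => -(p.1 : ℤ)) ++ ([-((bs i).1 : ℤ), ((bs i).2 : ℤ)]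
              ++ ((l.reverse.map fun p => ((p.2 : ℤ))).take (j - l.length - 2))) := by
          rw [e0, List.take_append,
            List.take_of_length_le (by simp; omega)]
          congr 3
          all_goals simp
          all_goals omega
        rw [e, List.sum_append, sum_neg_fst, List.sum_append]
        have hnn : 0 ≤ ((l.reverse.map fun p => ((p.2 : ℤ))).take (j - l.length - 2)).sum := by
          apply List.sum_nonneg
          intro x hx
          have hx' := List.mem_of_mem_take hx
          simp only [List.mem_map] at hx'
          obtain ⟨y, -, rfl⟩ := hx'
          positivity
        simp only [List.sum_cons, List.sum_nil]
        omega

lemma s1_cons (p : ℕ × ℕ) (l : List (ℕ × ℕ)) : s1 (p :: l) = p.1 + s1 l := by simp [s1]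
lemma s2_cons (p : ℕ × ℕ) (l : List (ℕ × ℕ)) : s2 (p :: l) = p.2 + s2 l := by simp [s2]

lemma list_sum_eq (l : List (ℕ × ℕ)) : l.sum = (s1 l, s2 l) := by
  induction l with
  | nil => simp [s1, s2]; rfl
  | cons p l ih =>
    rw [List.sum_cons, ih, s1_cons, s2_cons]
    simp [Prod.ext_iff]

lemma split_ones {S : Finset (ℕ × ℕ)} (l : List (ℕ × ℕ))
    (hl : ∀ p ∈ l, p ∈ insert (1,1) S) :
    ∃ l' k, (∀ p ∈ l', p ∈ S) ∧ s1 l = s1 l' + k ∧ s2 l = s2 l' + k := by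
  induction l with
  | nil => exact ⟨[], 0, by simp, by simp, by simp⟩
  | cons p l ih =>
    obtain ⟨l', k, h1, h2, h3⟩ := ih (fun x hx => hl x (by simp [hx]))
    rcases Finset.mem_insert.mp (hl p (by simp)) with hp | hp
    · refine ⟨l', k + 1, h1, ?_, ?_⟩ <;> rw [hp] at * <;>
        simp only [s1_cons, s2_cons] <;> omega
    · refine ⟨p :: l', k, ?_, ?_, ?_⟩
      · intro x hx
        rcases List.mem_cons.mp hx with rfl | hx
        · exact hp
        · exact h1 x hx
      · rw [s1_cons, s1_cons]; omega
      · rw [s2_cons, s2_cons]; omega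

lemma reach_iff {a c : ℕ} :
    GVAS1.Reach (mkG bs Ps) a c ↔
      ∃ i l, (∀ p ∈ l, p ∈ insert (1,1) (Ps i)) ∧
        (bs i).1 + s1 l ≤ a ∧
        (c : ℤ) = (a : ℤ) - (s1 l : ℤ) - ((bs i).1 : ℤ) + ((bs i).2 : ℤ) + (s2 l : ℤ) := by
  constructor
  · rintro ⟨w, hder, hval, hsum⟩
    obtain ⟨i, l, hl, rfl⟩ := generates_iff.mp hder
    refine ⟨i, l, hl, (validRun_iff a i l).mp hval, ?_⟩
    rw [wordOf_sum] at hsum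
    omega
  · rintro ⟨i, l, hl, hle, hc⟩
    exact ⟨wordOf bs i l, generates_iff.mpr ⟨i, l, hl, rfl⟩,
      (validRun_iff a i l).mpr hle, by rw [wordOf_sum]; omega⟩

end Construction


/-- Every semilinear diagonal relation `R ⊆ ℕ²` is the reachability
relation of some thin 1-GVAS. -/
theorem semilinear_diagonal_is_thin_reachability (R : Set (ℕ × ℕ))
    (hsemi : IsSemilinearSet R)
    (hdiag : ∀ a b : ℕ, (a, b) ∈ R → (a + 1, b + 1) ∈ R) :
    ∃ G : GVAS1, Finite G.NT ∧ G.Thin ∧ G.RRel = R := by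
  obtain ⟨n, L, hL, rfl⟩ := hsemi
  choose bs Ps hLP using hL
  refine ⟨mkG bs Ps, ?_, ?_, ?_⟩
  · exact inferInstanceAs (Finite (Option (Fin n)))
  · exact thin_mkG
  · have hdd : ∀ t x y : ℕ, (x, y) ∈ ⋃ j, L j → (x + t, y + t) ∈ ⋃ j, L j := by
      intro t
      induction t with
      | zero => intro x y h; simpa using h
      | succ t ih =>
        intro x y hxy
        have := hdiag _ _ (ih x y hxy)
        have e1 : x + (t + 1) = x + t + 1 := by omega
        have e2 : y + (t + 1) = y + t + 1 := by omega
        rw [e1, e2]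
        exact this
    ext ⟨a, c⟩
    simp only [GVAS1.RRel, Set.mem_setOf_eq]
    rw [reach_iff]
    constructor
    · rintro ⟨i, l, hl, hle, hc⟩
      obtain ⟨l', k, h1, h2, h3⟩ := split_ones l hl
      have ha : a = (bs i).1 + s1 l' + (k + (a - ((bs i).1 + s1 l))) := by omega
      have hc' : c = (bs i).2 + s2 l' + (k + (a - ((bs i).1 + s1 l))) := by omega
      have hmem : ((bs i).1 + s1 l', (bs i).2 + s2 l') ∈ ⋃ j, L j := by
        refine Set.mem_iUnion.mpr ⟨i, ?_⟩
        rw [hLP i]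
        refine ⟨l'.sum, ?_, ?_⟩
        · show l'.sum ∈ AddSubmonoid.closure ((Ps i : Set (ℕ × ℕ)))
          exact AddSubmonoid.list_sum_mem _
            (fun x hx => AddSubmonoid.subset_closure (h1 x hx))
        · rw [list_sum_eq]
          simp [Prod.ext_iff]
      have := hdd (k + (a - ((bs i).1 + s1 l))) _ _ hmem
      rw [ha, hc']
      exact this
    · intro hmem
      obtain ⟨i, hmem⟩ := Set.mem_iUnion.mp hmem
      rw [hLP i] at hmem
      obtain ⟨q, hq, heq⟩ := hmem
      obtain ⟨l, hl, rfl⟩ := AddSubmonoid.exists_list_of_mem_closure hq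
      have h1 : a = (bs i).1 + s1 l ∧ c = (bs i).2 + s2 l := by
        rw [list_sum_eq] at heq
        have e1 := congrArg Prod.fst heq
        have e2 := congrArg Prod.snd heq
        simp at e1 e2
        exact ⟨e1.symm, e2.symm⟩
      refine ⟨i, l, fun p hp => Finset.mem_insert_of_mem (Finset.mem_coe.mp (hl p hp)), ?_, ?_⟩
      · omega
      · push_cast
        omega

end GVASPaper
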